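/- (Theorem 4.10, one step with the sharper factor δ_{k,1}) Let A ∈ ℝ^{m×p} have all rows nonzero, B ∈ ℝ^{q×n}, C ∈ ℝ^{m×n}, let X⋆ satisfy A X⋆ B = C, and let 0 < α < 2/‖B‖². Let σ_A, σ_B > 0 be such that ‖A v‖ ≥ σ_A ‖v‖ for all v in the column space of Aᵀ and ‖Bᵀ w‖ ≥ σ_B ‖w‖ for all w in the column space of B. Let X ∈ ℝ^{p×q} have every column of X − X⋆ in the column space of Aᵀ and every column of (X − X⋆)ᵀ in the column space of B, and set R = C − A X B with R ≠ 0. Define Ω := { i : ‖R_{i,:}‖²/‖A_{i,:}‖² < (1/m) Σ_{j=1}^m ‖R_{j,:}‖²/‖A_{j,:}‖² }, and let ε ∈ (0,1] be defined by (1/m) Σ_j ‖R_{j,:}‖²/‖A_{j,:}‖² = ε · max_j ‖R_{j,:}‖²/‖A_{j,:}‖². Let i⋆ maximize ‖R_{i,:}‖²/‖A_{i,:}‖², and set X⁺ = X + (α/‖A_{i⋆,:}‖²) A_{i⋆,:}ᵀ R_{i⋆,:} Bᵀ. Then ‖X⁺ − X⋆‖_F² ≤ (1 − (2α − α²‖B‖²)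 · φ · σ_A² σ_B²) ‖X − X⋆‖_F², where φ = 1 / ( Σ_{i∉Ω} ‖A_{i,:}‖² + ε Σ_{i∈Ω} ‖A_{i,:}‖² ). -/
import Mathlib


open Matrix Finset Filter Topology

/-- Squared Euclidean norm of a vector. -/
noncomputable def vnormSq {k : ℕ} (v : Fin k → ℝ) : ℝ := ∑ j, (v j) ^ 2

/-- Squared Frobenius norm of a matrix. -/
noncomputable def frobSq {a b : ℕ} (X : Matrix (Fin a) (Fin b) ℝ) : ℝ := ∑ i, ∑ j, (X i j) ^ 2

/-- Frobenius norm of a matrix. -/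
noncomputable def frobNorm {a b : ℕ} (X : Matrix (Fin a) (Fin b) ℝ) : ℝ := Real.sqrt (frobSq X)

/-- Frobenius (trace) inner product `⟨X, Y⟩_F = tr(Xᵀ Y)`. -/
noncomputable def frobInner {a b : ℕ} (X Y : Matrix (Fin a) (Fin b) ℝ) : ℝ := Matrix.trace (Xᵀ * Y)

/-- Spectral (operator 2-) norm of a matrix. -/
noncomputable def specNorm {a b : ℕ} (B : Matrix (Fin a) (Fin b) ℝ) : ℝ :=
  ‖LinearMap.toContinuousLinearMap (Matrix.toEuclideanLin B)‖

/-- `Mp` is the Moore–Penrose pseudoinverse of `M`: the four Penrose conditions. -/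
def IsMPInv {a b : ℕ} (M : Matrix (Fin a) (Fin b) ℝ) (Mp : Matrix (Fin b) (Fin a) ℝ) : Prop :=
  M * Mp * M = M ∧ Mp * M * Mp = Mp ∧ (M * Mp)ᵀ = M * Mp ∧ (Mp * M)ᵀ = Mp * M

lemma vnormSq_nonneg {k : ℕ} (v : Fin k → ℝ) : 0 ≤ vnormSq v :=
  Finset.sum_nonneg fun _ _ => sq_nonneg _

lemma vnormSq_pos {k : ℕ} (v : Fin k → ℝ) (h : v ≠ 0) : 0 < vnormSq v := by
  obtain ⟨i, hi⟩ := Function.ne_iff.mp h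
  exact Finset.sum_pos' (fun _ _ => sq_nonneg _)
    ⟨i, Finset.mem_univ i, pow_two_pos_of_ne_zero hi⟩

lemma vnormSq_eq_norm_sq {k : ℕ} (v : EuclideanSpace ℝ (Fin k)) :
    vnormSq (v : Fin k → ℝ) = ‖v‖ ^ 2 := by
  rw [EuclideanSpace.norm_eq, Real.sq_sqrt (Finset.sum_nonneg fun _ _ => sq_nonneg _)]
  simp [vnormSq, Real.norm_eq_abs, sq_abs]

lemma mulVec_spec_bound {q n : ℕ} (B : Matrix (Fin q) (Fin n) ℝ) (r : Fin n → ℝ) :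
    vnormSq (B *ᵥ r) ≤ specNorm B ^ 2 * vnormSq r := by
  have h := (LinearMap.toContinuousLinearMap (Matrix.toEuclideanLin B)).le_opNorm
    ((EuclideanSpace.equiv (Fin n) ℝ).symm r)
  have h1 : vnormSq (B *ᵥ r) = ‖LinearMap.toContinuousLinearMap (Matrix.toEuclideanLin B)
      ((EuclideanSpace.equiv (Fin n) ℝ).symm r)‖ ^ 2 := by
    rw [← vnormSq_eq_norm_sq]; rfl
  have h2 : vnormSq r = ‖((EuclideanSpace.equiv (Fin n) ℝ).symm r)‖ ^ 2 := by
    rw [← vnormSq_eq_norm_sq]; rfl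
  rw [h1, h2, specNorm, ← mul_pow]
  exact pow_le_pow_left₀ (norm_nonneg _) h 2

lemma sqrt_ineq_sq {σ x y : ℝ} (hx : 0 ≤ x) (hy : 0 ≤ y) (hσ : 0 ≤ σ)
    (h : σ * Real.sqrt x ≤ Real.sqrt y) : σ ^ 2 * x ≤ y := by
  have h2 := pow_le_pow_left₀ (by positivity) h 2
  rwa [mul_pow, Real.sq_sqrt hx, Real.sq_sqrt hy] at h2

lemma frobSq_add_smul_vecMulVec {p q : ℕ} (E : Matrix (Fin p) (Fin q) ℝ) (s : ℝ)
    (u : Fin p → ℝ) (v : Fin q → ℝ) :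
    frobSq (E + s • vecMulVec u v)
      = frobSq E + 2 * s * (∑ i, ∑ j, E i j * u i * v j)
        + s ^ 2 * (vnormSq u * vnormSq v) := by
  have c2 : vnormSq u * vnormSq v = ∑ i, ∑ j, u i ^ 2 * v j ^ 2 := by
    rw [vnormSq, vnormSq, Finset.sum_mul_sum]
  simp only [frobSq, Matrix.add_apply, Matrix.smul_apply, vecMulVec_apply, smul_eq_mul, c2,
    Finset.mul_sum, ← Finset.sum_add_distrib]
  exact Finset.sum_congr rfl fun i _ => Finset.sum_congr rfl fun j _ => by ring

lemma cross_term {m p q n : ℕ} (A : Matrix (Fin m) (Fin p) ℝ) (E : Matrix (Fin p) (Fin q) ℝ)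
    (B : Matrix (Fin q) (Fin n) ℝ) (i0 : Fin m) (r : Fin n → ℝ) :
    ∑ i, ∑ j, E i j * A i0 i * (B *ᵥ r) j = ∑ t, (A * E * B) i0 t * r t := by
  calc ∑ i, ∑ j, E i j * A i0 i * (B *ᵥ r) j
      = ∑ j, (A * E) i0 j * (B *ᵥ r) j := by
        rw [Finset.sum_comm]
        refine Finset.sum_congr rfl fun j _ => ?_
        rw [Matrix.mul_apply, Finset.sum_mul]
        exact Finset.sum_congr rfl fun i _ => by ring
    _ = ∑ j, ∑ t, (A * E) i0 j * B j t * r t := by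
        refine Finset.sum_congr rfl fun j _ => ?_
        rw [Matrix.mulVec, dotProduct, Finset.mul_sum]
        exact Finset.sum_congr rfl fun t _ => by ring
    _ = ∑ t, (A * E * B) i0 t * r t := by
        rw [Finset.sum_comm]
        refine Finset.sum_congr rfl fun t _ => ?_
        rw [Matrix.mul_apply, Finset.sum_mul]

/-- Theorem 4.10, one MWRBK step with the sharper factor `δ_{k,1} = 1 − (2α−α²‖B‖²) φ σ_A² σ_B²`. -/
theorem stmt15 {m p q n : ℕ}
    (A : Matrix (Fin m) (Fin p) ℝ) (hrows : ∀ i : Fin m, A i ≠ 0)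
    (B : Matrix (Fin q) (Fin n) ℝ) (C : Matrix (Fin m) (Fin n) ℝ)
    (Xstar : Matrix (Fin p) (Fin q) ℝ) (hsol : A * Xstar * B = C)
    (α : ℝ) (hα1 : 0 < α) (hα2 : α < 2 / specNorm B ^ 2)
    (σA σB : ℝ) (hσA : 0 < σA) (hσB : 0 < σB)
    (hA : ∀ v : Fin p → ℝ, (∃ u : Fin m → ℝ, v = Aᵀ *ᵥ u) →
      σA * Real.sqrt (vnormSq v) ≤ Real.sqrt (vnormSq (A *ᵥ v)))
    (hB : ∀ w : Fin q → ℝ, (∃ u : Fin n → ℝ, w = B *ᵥ u) →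
      σB * Real.sqrt (vnormSq w) ≤ Real.sqrt (vnormSq (Bᵀ *ᵥ w)))
    (X : Matrix (Fin p) (Fin q) ℝ)
    (hcol : ∀ j : Fin q, ∃ u : Fin m → ℝ, (fun i => (X - Xstar) i j) = Aᵀ *ᵥ u)
    (hrow : ∀ i : Fin p, ∃ w : Fin n → ℝ, (X - Xstar) i = B *ᵥ w)
    (R : Matrix (Fin m) (Fin n) ℝ) (hRdef : R = C - A * X * B) (hR0 : R ≠ 0)
    (Ω : Finset (Fin m))
    (hΩ : Ω = Finset.univ.filter fun i =>
      vnormSq (R i) / vnormSq (A i)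
        < (1 / (m : ℝ)) * ∑ j : Fin m, vnormSq (R j) / vnormSq (A j))
    (istar : Fin m)
    (hmax : ∀ i : Fin m,
      vnormSq (R i) / vnormSq (A i) ≤ vnormSq (R istar) / vnormSq (A istar))
    (ε : ℝ) (hε0 : 0 < ε) (hε1 : ε ≤ 1)
    (hεdef : (1 / (m : ℝ)) * ∑ j : Fin m, vnormSq (R j) / vnormSq (A j)
      = ε * (vnormSq (R istar) / vnormSq (A istar)))
    (φ : ℝ)
    (hφ : φ = 1 / (∑ i ∈ Ωᶜ, vnormSq (A i) + ε * ∑ i ∈ Ω, vnormSq (A i))) :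
    frobSq (X + (α / vnormSq (A istar)) • vecMulVec (A istar) (B *ᵥ (R istar)) - Xstar)
      ≤ (1 - (2 * α - α ^ 2 * specNorm B ^ 2) * φ * (σA ^ 2 * σB ^ 2))
          * frobSq (X - Xstar) := by
  classical
  set E := X - Xstar with hE
  set r : Fin n → ℝ := R istar with hr
  set a : ℝ := vnormSq (A istar) with ha
  set b : ℝ := specNorm B ^ 2 with hb
  have haipos : ∀ i, 0 < vnormSq (A i) := fun i => vnormSq_pos _ (hrows i)
  have hapos : 0 < a := haipos istar
  -- b > 0 and coefficient positivity
  have hbnn : 0 ≤ b := sq_nonneg _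
  have hbpos : 0 < b := by
    rcases hbnn.lt_or_eq with h | h
    · exact h
    · rw [← h, div_zero] at hα2; linarith
  have hαb : α * b < 2 := (lt_div_iff₀ hbpos).mp hα2
  have hcpos : 0 < 2 * α - α ^ 2 * b := by nlinarith
  -- A * E * B = -R
  have hAEB : A * E * B = -R := by
    rw [hE, Matrix.mul_sub, Matrix.sub_mul, hsol, hRdef]
    abel
  -- column-space bound : σA² frobSq E ≤ frobSq (A*E)
  have hAE : σA ^ 2 * frobSq E ≤ frobSq (A * E) := by
    have hcolsE : frobSq E = ∑ j, vnormSq (fun i => E i j) := by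
      rw [frobSq, Finset.sum_comm]; rfl
    have hcolsAE : frobSq (A * E) = ∑ j, vnormSq (fun i => (A * E) i j) := by
      rw [frobSq, Finset.sum_comm]; rfl
    rw [hcolsE, hcolsAE, Finset.mul_sum]
    refine Finset.sum_le_sum fun j _ => ?_
    have hv : (fun i => (A * E) i j) = A *ᵥ (fun i => E i j) := by
      funext i; rw [Matrix.mulVec, dotProduct, Matrix.mul_apply]
    rw [hv]
    exact sqrt_ineq_sq (vnormSq_nonneg _) (vnormSq_nonneg _) hσA.le
      (hA _ (hcol j))
  -- row-space bound : σB² frobSq (A*E) ≤ frobSq (A*E*B)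
  have hAEB2 : σB ^ 2 * frobSq (A * E) ≤ frobSq (A * E * B) := by
    have h1 : frobSq (A * E) = ∑ i, vnormSq ((A * E) i) := rfl
    have h2 : frobSq (A * E * B) = ∑ i, vnormSq ((A * E * B) i) := rfl
    rw [h1, h2, Finset.mul_sum]
    refine Finset.sum_le_sum fun i _ => ?_
    have hmem : ∃ u : Fin n → ℝ, (A * E) i = B *ᵥ u := by
      choose w hw using hrow
      refine ⟨fun t => ∑ k, A i k * w k t, ?_⟩
      funext j
      rw [Matrix.mulVec, dotProduct, Matrix.mul_apply]
      simp only [Finset.mul_sum]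
      rw [Finset.sum_comm]
      refine Finset.sum_congr rfl fun k _ => ?_
      have := congrFun (hw k) j
      rw [Matrix.mulVec, dotProduct] at this
      rw [this, Finset.mul_sum]
      exact Finset.sum_congr rfl fun t _ => by ring
    have hv : (A * E * B) i = Bᵀ *ᵥ ((A * E) i) := by
      funext t
      rw [Matrix.mulVec, dotProduct, Matrix.mul_apply]
      exact Finset.sum_congr rfl fun j _ => by rw [Matrix.transpose_apply]; ring
    rw [hv]
    exact sqrt_ineq_sq (vnormSq_nonneg _) (vnormSq_nonneg _) hσB.le (hB _ hmem)
  have hfrobRAEB : frobSq R = frobSq (A * E * B) := by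
    rw [hAEB]; simp [frobSq]
  have hRE : σA ^ 2 * σB ^ 2 * frobSq E ≤ frobSq R := by
    rw [hfrobRAEB]
    calc σA ^ 2 * σB ^ 2 * frobSq E = σB ^ 2 * (σA ^ 2 * frobSq E) := by ring
      _ ≤ σB ^ 2 * frobSq (A * E) := by
          exact mul_le_mul_of_nonneg_left hAE (by positivity)
      _ ≤ frobSq (A * E * B) := hAEB2
  -- the max ratio M
  set M : ℝ := vnormSq r / a with hM
  have hMnn : 0 ≤ M := div_nonneg (vnormSq_nonneg _) hapos.le
  -- istar ∉ Ω
  have histar : istar ∉ Ω := by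
    rw [hΩ, Finset.mem_filter]
    rintro ⟨-, hlt⟩
    rw [hεdef] at hlt
    have : ε * (vnormSq (R istar) / vnormSq (A istar)) ≤ M := by
      rw [hM, ha, hr]
      exact mul_le_of_le_one_left (div_nonneg (vnormSq_nonneg _) (haipos istar).le) hε1
    exact absurd (lt_of_lt_of_le hlt this) (lt_irrefl M)
  -- D > 0
  set D : ℝ := ∑ i ∈ Ωᶜ, vnormSq (A i) + ε * ∑ i ∈ Ω, vnormSq (A i) with hD
  have hDpos : 0 < D := by
    have h1 : vnormSq (A istar) ≤ ∑ i ∈ Ωᶜ, vnormSq (A i) :=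
      Finset.single_le_sum (fun i _ => (vnormSq_nonneg _)) (Finset.mem_compl.mpr histar)
    have h2 : 0 ≤ ε * ∑ i ∈ Ω, vnormSq (A i) :=
      mul_nonneg hε0.le (Finset.sum_nonneg fun i _ => vnormSq_nonneg _)
    rw [hD]; linarith [haipos istar]
  have hφpos : 0 < φ := by rw [hφ]; positivity
  -- frobSq R ≤ M * D
  have hRD : frobSq R ≤ M * D := by
    have hsplit : frobSq R = ∑ i ∈ Ω, vnormSq (R i) + ∑ i ∈ Ωᶜ, vnormSq (R i) := by
      rw [frobSq]
      exact (Finset.sum_add_sum_compl Ω _).symm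
    have hΩle : ∀ i ∈ Ω, vnormSq (R i) ≤ ε * M * vnormSq (A i) := by
      intro i hi
      rw [hΩ, Finset.mem_filter] at hi
      have hlt := hi.2
      rw [hεdef] at hlt
      have : vnormSq (R i) / vnormSq (A i) ≤ ε * M := by
        rw [hM, ha, hr]; exact hlt.le
      calc vnormSq (R i) = vnormSq (R i) / vnormSq (A i) * vnormSq (A i) :=
            (div_mul_cancel₀ _ (haipos i).ne').symm
        _ ≤ ε * M * vnormSq (A i) :=
            mul_le_mul_of_nonneg_right this (haipos i).le
    have hΩcle : ∀ i ∈ Ωᶜ, vnormSq (R i) ≤ M * vnormSq (A i) := by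
      intro i _
      have : vnormSq (R i) / vnormSq (A i) ≤ M := by rw [hM, ha, hr]; exact hmax i
      calc vnormSq (R i) = vnormSq (R i) / vnormSq (A i) * vnormSq (A i) :=
            (div_mul_cancel₀ _ (haipos i).ne').symm
        _ ≤ M * vnormSq (A i) := mul_le_mul_of_nonneg_right this (haipos i).le
    calc frobSq R = ∑ i ∈ Ω, vnormSq (R i) + ∑ i ∈ Ωᶜ, vnormSq (R i) := hsplit
      _ ≤ ∑ i ∈ Ω, ε * M * vnormSq (A i) + ∑ i ∈ Ωᶜ, M * vnormSq (A i) :=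
          add_le_add (Finset.sum_le_sum hΩle) (Finset.sum_le_sum hΩcle)
      _ = M * D := by rw [hD, ← Finset.mul_sum, ← Finset.mul_sum]; ring
  have hφM : φ * frobSq R ≤ M := by
    have := mul_le_mul_of_nonneg_left hRD hφpos.le
    calc φ * frobSq R ≤ φ * (M * D) := this
      _ = M * (φ * D) := by ring
      _ = M := by
          rw [hφ]
          field_simp
  have hkey : φ * (σA ^ 2 * σB ^ 2) * frobSq E ≤ M := by
    refine le_trans ?_ hφM
    calc φ * (σA ^ 2 * σB ^ 2) * frobSq E = φ * (σA ^ 2 * σB ^ 2 * frobSq E) := by ring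
      _ ≤ φ * frobSq R := mul_le_mul_of_nonneg_left hRE hφpos.le
  -- expansion
  have hmatrix : X + (α / a) • vecMulVec (A istar) (B *ᵥ r) - Xstar
      = E + (α / a) • vecMulVec (A istar) (B *ᵥ r) := by
    rw [hE]; abel
  have hcross : ∑ i, ∑ j, E i j * A istar i * (B *ᵥ r) j = - vnormSq r := by
    rw [cross_term A E B istar r, hAEB]
    simp only [Matrix.neg_apply, hr, vnormSq]
    rw [← Finset.sum_neg_distrib]
    exact Finset.sum_congr rfl fun t _ => by ring
  have hexp := frobSq_add_smul_vecMulVec E (α / a) (A istar) (B *ᵥ r)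
  rw [hmatrix, hexp, hcross, ← ha]
  -- final estimate
  have hBr : vnormSq (B *ᵥ r) ≤ b * vnormSq r := mulVec_spec_bound B r
  have hEnn : 0 ≤ frobSq E := Finset.sum_nonneg fun _ _ => vnormSq_nonneg _
  have step1 : frobSq E + 2 * (α / a) * (- vnormSq r)
        + (α / a) ^ 2 * (a * vnormSq (B *ᵥ r))
      ≤ frobSq E - (2 * α - α ^ 2 * b) * M := by
    have h1 : (α / a) ^ 2 * (a * vnormSq (B *ᵥ r)) ≤ (α / a) ^ 2 * (a * (b * vnormSq r)) := by
      have := mul_le_mul_of_nonneg_left hBr hapos.le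
      exact mul_le_mul_of_nonneg_left this (by positivity)
    have h2 : frobSq E + 2 * (α / a) * (- vnormSq r) + (α / a) ^ 2 * (a * (b * vnormSq r))
        = frobSq E - (2 * α - α ^ 2 * b) * M := by
      rw [hM]; field_simp; ring
    linarith
  have step2 : frobSq E - (2 * α - α ^ 2 * b) * M
      ≤ frobSq E - (2 * α - α ^ 2 * b) * (φ * (σA ^ 2 * σB ^ 2) * frobSq E) := by
    have := mul_le_mul_of_nonneg_left hkey hcpos.le
    linarith
  calc frobSq E + 2 * (α / a) * (- vnormSq r) + (α / a) ^ 2 * (vnormSq (A istar) * vnormSq (B *ᵥ r))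
      ≤ frobSq E - (2 * α - α ^ 2 * b) * M := by rw [← ha]; exact step1
    _ ≤ frobSq E - (2 * α - α ^ 2 * b) * (φ * (σA ^ 2 * σB ^ 2) * frobSq E) := step2
    _ = (1 - (2 * α - α ^ 2 * b) * φ * (σA ^ 2 * σB ^ 2)) * frobSq E := by ring
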